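/- Let $R$ be a commutative local ring with maximal ideal $\mathfrak{m}$ and residue field $k$, let $n \geq 1$, and let $x, y : \mathrm{Fin}(n+1) \to R$ be vectors such that at least one coordinate of $x$ and at least one coordinate of $y$ is a unit of $R$. Let $\bar{x}, \bar{y} : \mathrm{Fin}(n+1) \to k$ denote the coordinatewise reductions modulo $\mathfrak{m}$ (both are nonzero vectors). Then there exists $c \in k^\times$ with $\bar{y}_i = c \cdot \bar{x}_i$ for all $i$ (i.e., $\bar{x}$ and $\bar{y}$ define the same point of projective $n$-space over $k$) if and only if $x_i y_j - x_j y_i \in \mathfrak{m}$ for all $i, j$. -/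

import Mathlib

/-- Over a commutative local ring `R` with maximal ideal `𝔪` and residue
field `k`, two vectors `x y : Fin (n+1) → R`, each with at least one unit coordinate, have
coordinatewise reductions defining the same point of `ℙⁿ(k)` (i.e. differing by a unit scalar
`c ∈ kˣ`) if and only if all the `2 × 2` minors `xᵢ yⱼ - xⱼ yᵢ` lie in `𝔪`. -/
theorem residue_proportional_iff_minors_mem_maximalIdeal
    (R : Type*) [CommRing R] [IsLocalRing R] (n : ℕ) (hn : 1 ≤ n)
    (x y : Fin (n + 1) → R)
    (hx : ∃ i, IsUnit (x i)) (hy : ∃ i, IsUnit (y i)) :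
    (∃ c : (IsLocalRing.ResidueField R)ˣ,
        ∀ i, IsLocalRing.residue R (y i) = (c : IsLocalRing.ResidueField R) *
          IsLocalRing.residue R (x i)) ↔
      ∀ i j, x i * y j - x j * y i ∈ IsLocalRing.maximalIdeal R := by
  constructor
  · rintro ⟨c, hc⟩ i j
    rw [← IsLocalRing.residue_eq_zero_iff]
    simp only [map_sub, map_mul, hc]
    ring
  · intro h
    obtain ⟨i₀, hi₀⟩ := hx
    obtain ⟨j₀, hj₀⟩ := hy
    have hxi : IsLocalRing.residue R (x i₀) ≠ 0 :=
      (IsLocalRing.residue_ne_zero_iff_isUnit _).mpr hi₀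
    have key : ∀ i j, IsLocalRing.residue R (x i) * IsLocalRing.residue R (y j)
        = IsLocalRing.residue R (x j) * IsLocalRing.residue R (y i) := by
      intro i j
      have := (IsLocalRing.residue_eq_zero_iff _).mpr (h i j)
      simp only [map_sub, map_mul] at this
      linear_combination this
    set c : IsLocalRing.ResidueField R :=
      IsLocalRing.residue R (y i₀) / IsLocalRing.residue R (x i₀) with hcdef
    have hprop : ∀ i, IsLocalRing.residue R (y i) = c * IsLocalRing.residue R (x i) := by
      intro i
      rw [hcdef, div_mul_eq_mul_div, eq_div_iff hxi]
      linear_combination (key i₀ i)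
    have hcne : c ≠ 0 := by
      intro hc0
      have := hprop j₀
      rw [hc0, zero_mul] at this
      exact (IsLocalRing.residue_ne_zero_iff_isUnit _).mpr hj₀ this
    exact ⟨Units.mk0 c hcne, hprop⟩
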